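/- arXiv:1302.3831 — 2 statements merged into one kernel-verified Lean document; each statement's English description precedes it below -/
import Mathlib

section
/- Let {ab_{ij}}_{i,j ∈ {1,2}} and {ab'_{ij}}_{i,j ∈ {1,2}} be orthonormal bases of ℂ⁴, let {a₁, a₂}, {b₁, b₂}, {b'₁, b'₂} be orthonormal bases of ℂ², let I_AB and I_AB' be the unitary operators on ℂ⁴ determined by I_AB ab_{ij} = aᵢ ⊗ bⱼ and I_AB' ab'_{ij} = aᵢ ⊗ b'ⱼ, and let U be the unitary operator on ℂ⁴ determined by U ab_{ij} = ab'_{ij}. Then the composite I_AB' ∘ U ∘ I_AB⁻¹ satisfies (I_AB' ∘ U ∘ I_AB⁻¹)(u ⊗ v) = u ⊗ (W v) for all u, v ∈ ℂ², where W is the unitary operator on ℂ² with W bⱼ = b'ⱼ; consequently, for all real μ₁, μ₂, ν₁, ν₂, conjugation by I_AB' ∘ U ∘ I_AB⁻¹ transforms E_A ⊗ E_B into E_A ⊗ E_{B'}, where E_A = Σᵢ μᵢ|aᵢ⟩⟨aᵢ|, E_B = Σⱼ νⱼ|bⱼ⟩⟨bⱼ| and E_{B'} = Σⱼ νⱼ|b'ⱼ⟩⟨b'ⱼ|.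 In other words, in the contextual representation where each coincidence measurement uses its own isomorphism, the connecting dynamical evolutions are product evolutions. -/
open scoped InnerProductSpace Kronecker Matrix

noncomputable section

/-- Tensor product `u ⊗ v` of two vectors of ℂ², as a vector of ℂ⁴ (the model of ℂ²⊗ℂ²):
`(u ⊗ v)(i,j) = u i * v j`. -/
def tp (u v : EuclideanSpace ℂ (Fin 2)) : EuclideanSpace ℂ (Fin 2 × Fin 2) :=
  WithLp.toLp 2 (fun p => u p.1 * v p.2)

/-- Outer product `|w⟩⟨w|`, the matrix with entries `w i * conj (w j)`. -/
def outer {n : Type*} [Fintype n] (w : EuclideanSpace ℂ n) : Matrix n n ℂ :=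
  fun i j => w i * (starRingEnd ℂ) (w j)

/-- Action of a matrix on a Euclidean-space vector by matrix-vector multiplication. -/
def mulVecE {n : Type*} [Fintype n] (M : Matrix n n ℂ) (x : EuclideanSpace ℂ n) :
    EuclideanSpace ℂ n := WithLp.toLp 2 (M.mulVec x)

lemma tp_sum_sum (c d : Fin 2 → ℂ) (a b : Fin 2 → EuclideanSpace ℂ (Fin 2)) :
    tp (∑ i, c i • a i) (∑ j, d j • b j) = ∑ i, ∑ j, (c i * d j) • tp (a i) (b j) := by
  ext p
  simp [tp, WithLp.ofLp_sum, Finset.sum_apply, Pi.smul_apply, smul_eq_mul, Finset.sum_mul, Finset.mul_sum]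
  ring

lemma tp_smul (c d : ℂ) (u v : EuclideanSpace ℂ (Fin 2)) :
    tp (c • u) (d • v) = (c * d) • tp u v := by
  ext p
  simp [tp, Pi.smul_apply, smul_eq_mul]
  ring

lemma kron_mulVec (A B : Matrix (Fin 2) (Fin 2) ℂ) (u v : EuclideanSpace ℂ (Fin 2)) :
    mulVecE (A ⊗ₖ B) (tp u v) = tp (mulVecE A u) (mulVecE B v) := by
  ext ⟨i, j⟩
  fin_cases i <;> fin_cases j <;>
  simp [mulVecE, Matrix.mulVec, dotProduct, tp, Fintype.sum_prod_type,
    Finset.sum_mul, Finset.mul_sum] <;>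
  ring

lemma mulVecE_sum {n ι : Type*} [Fintype n] (s : Finset ι) (M : Matrix n n ℂ)
    (f : ι → EuclideanSpace ℂ n) :
    mulVecE M (∑ i ∈ s, f i) = ∑ i ∈ s, mulVecE M (f i) :=
  by ext; simp [mulVecE, WithLp.ofLp_sum, Matrix.mulVec_sum, Finset.sum_apply]

lemma mulVecE_smul {n : Type*} [Fintype n] (M : Matrix n n ℂ) (c : ℂ)
    (x : EuclideanSpace ℂ n) :
    mulVecE M (c • x) = c • mulVecE M x :=
  by ext; simp [mulVecE, Matrix.mulVec_smul]

lemma eigen (mu : Fin 2 → ℝ) (a : Fin 2 → EuclideanSpace ℂ (Fin 2))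
    (ha : Orthonormal ℂ a) (i : Fin 2) :
    mulVecE (∑ k, (mu k : ℂ) • outer (a k)) (a i) = (mu i : ℂ) • a i := by
  have key : ∀ k l : Fin 2, (∑ q, (starRingEnd ℂ) (a k q) * a l q) = if k = l then 1 else 0 := by
    intro k l
    simpa [PiLp.inner_apply, mul_comm] using orthonormal_iff_ite.mp ha k l
  ext j
  simp only [mulVecE, PiLp.toLp_apply, Matrix.mulVec, dotProduct, Matrix.sum_apply, Matrix.smul_apply,
    outer, smul_eq_mul, Finset.sum_mul, PiLp.smul_apply]
  rw [Finset.sum_comm]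
  calc (∑ k, ∑ q, (mu k : ℂ) * (a k j * (starRingEnd ℂ) (a k q)) * a i q)
      = ∑ k, (mu k : ℂ) * a k j * (∑ q, (starRingEnd ℂ) (a k q) * a i q) := by
        apply Finset.sum_congr rfl; intro k _; rw [Finset.mul_sum]; apply Finset.sum_congr rfl
        intro q _; ring
    _ = (mu i : ℂ) * a i j := by simp [key]

/-- with `I_AB ab_{ij} = aᵢ ⊗ bⱼ`, `I_AB' ab'_{ij} = aᵢ ⊗ b'ⱼ`,
`U ab_{ij} = ab'_{ij}` and `W bⱼ = b'ⱼ`, the composite `I_AB' ∘ U ∘ I_AB⁻¹` is the product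
evolution `𝟙 ⊗ W`, i.e. `(I_AB' ∘ U ∘ I_AB⁻¹)(u ⊗ v) = u ⊗ (W v)`; consequently conjugation
by it transforms `E_A ⊗ E_B` into `E_A ⊗ E_{B'}` for all real `μ₁,μ₂,ν₁,ν₂`, where
`E_A = Σᵢ μᵢ|aᵢ⟩⟨aᵢ|`, `E_B = Σⱼ νⱼ|bⱼ⟩⟨bⱼ|`, `E_{B'} = Σⱼ νⱼ|b'ⱼ⟩⟨b'ⱼ|`. -/
theorem contextual_isomorphisms_give_product_evolutions
    (ab ab' : Fin 2 → Fin 2 → EuclideanSpace ℂ (Fin 2 × Fin 2))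
    (hab : Orthonormal ℂ (fun q : Fin 2 × Fin 2 => ab q.1 q.2))
    (hab' : Orthonormal ℂ (fun q : Fin 2 × Fin 2 => ab' q.1 q.2))
    (a b b' : Fin 2 → EuclideanSpace ℂ (Fin 2))
    (ha : Orthonormal ℂ a) (hb : Orthonormal ℂ b) (hb' : Orthonormal ℂ b')
    (IAB IAB' U : EuclideanSpace ℂ (Fin 2 × Fin 2) ≃ₗᵢ[ℂ] EuclideanSpace ℂ (Fin 2 × Fin 2))
    (hIAB : ∀ i j : Fin 2, IAB (ab i j) = tp (a i) (b j))
    (hIAB' : ∀ i j : Fin 2, IAB' (ab' i j) = tp (a i) (b' j))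
    (hU : ∀ i j : Fin 2, U (ab i j) = ab' i j)
    (W : EuclideanSpace ℂ (Fin 2) ≃ₗᵢ[ℂ] EuclideanSpace ℂ (Fin 2))
    (hW : ∀ j : Fin 2, W (b j) = b' j) :
    (∀ u v : EuclideanSpace ℂ (Fin 2), IAB' (U (IAB.symm (tp u v))) = tp u (W v)) ∧
    (∀ mu nu : Fin 2 → ℝ, ∀ x : EuclideanSpace ℂ (Fin 2 × Fin 2),
      IAB' (U (IAB.symm (mulVecE
          ((∑ i : Fin 2, (mu i : ℂ) • outer (a i)) ⊗ₖ (∑ j : Fin 2, (nu j : ℂ) • outer (b j)))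
          (IAB (U.symm (IAB'.symm x)))))) =
        mulVecE ((∑ i : Fin 2, (mu i : ℂ) • outer (a i)) ⊗ₖ
          (∑ j : Fin 2, (nu j : ℂ) • outer (b' j))) x) := by
  classical
  have card2 : Fintype.card (Fin 2) = Module.finrank ℂ (EuclideanSpace ℂ (Fin 2)) :=
    (finrank_euclideanSpace).symm
  let Ba := basisOfOrthonormalOfCardEqFinrank ha card2
  let Bb := basisOfOrthonormalOfCardEqFinrank hb card2
  have hBa : (Ba : Fin 2 → EuclideanSpace ℂ (Fin 2)) = a :=
    coe_basisOfOrthonormalOfCardEqFinrank ha card2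
  have hBb : (Bb : Fin 2 → EuclideanSpace ℂ (Fin 2)) = b :=
    coe_basisOfOrthonormalOfCardEqFinrank hb card2
  have hexpa : ∀ u : EuclideanSpace ℂ (Fin 2), u = ∑ i, Ba.repr u i • a i := by
    intro u
    conv_lhs => rw [← Ba.sum_repr u]
    rw [hBa]
  have hexpb : ∀ v : EuclideanSpace ℂ (Fin 2), v = ∑ j, Bb.repr v j • b j := by
    intro v
    conv_lhs => rw [← Bb.sum_repr v]
    rw [hBb]
  have hV : ∀ i j, IAB' (U (IAB.symm (tp (a i) (b j)))) = tp (a i) (b' j) := by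
    intro i j
    rw [← hIAB, LinearIsometryEquiv.symm_apply_apply, hU, hIAB']
  have part1 : ∀ u v : EuclideanSpace ℂ (Fin 2),
      IAB' (U (IAB.symm (tp u v))) = tp u (W v) := by
    intro u v
    have hWv : W v = ∑ j, Bb.repr v j • b' j := by
      conv_lhs => rw [hexpb v]
      simp [hW]
    conv_lhs => rw [hexpa u, hexpb v, tp_sum_sum]
    conv_rhs => rw [hexpa u, hWv, tp_sum_sum]
    simp [hV]
  refine ⟨part1, ?_⟩
  intro mu nu x
  -- orthonormal basis of ℂ⁴ from tp (a i) (b j)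
  have he : Orthonormal ℂ (fun q : Fin 2 × Fin 2 => tp (a q.1) (b q.2)) := by
    have h := hab.comp_linearIsometry IAB.toLinearIsometry
    have : (IAB.toLinearIsometry ∘ fun q : Fin 2 × Fin 2 => ab q.1 q.2)
        = fun q : Fin 2 × Fin 2 => tp (a q.1) (b q.2) := by
      funext q
      simp [hIAB]
    rwa [this] at h
  have card4 : Fintype.card (Fin 2 × Fin 2)
      = Module.finrank ℂ (EuclideanSpace ℂ (Fin 2 × Fin 2)) :=
    (finrank_euclideanSpace).symm
  let B4 := basisOfOrthonormalOfCardEqFinrank he card4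
  have hB4 : (B4 : Fin 2 × Fin 2 → EuclideanSpace ℂ (Fin 2 × Fin 2))
      = fun q => tp (a q.1) (b q.2) := coe_basisOfOrthonormalOfCardEqFinrank he card4
  have hexp4 : ∀ y : EuclideanSpace ℂ (Fin 2 × Fin 2),
      y = ∑ q : Fin 2 × Fin 2, B4.repr y q • tp (a q.1) (b q.2) := by
    intro y
    conv_lhs => rw [← B4.sum_repr y]
    rw [hB4]
  have main : ∀ y : EuclideanSpace ℂ (Fin 2 × Fin 2),
      IAB' (U (IAB.symm (mulVecE
          ((∑ i, (mu i : ℂ) • outer (a i)) ⊗ₖ (∑ j, (nu j : ℂ) • outer (b j))) y)))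
        = mulVecE ((∑ i, (mu i : ℂ) • outer (a i)) ⊗ₖ (∑ j, (nu j : ℂ) • outer (b' j)))
            (IAB' (U (IAB.symm y))) := by
    intro y
    conv_lhs => rw [hexp4 y]
    conv_rhs => rw [hexp4 y]
    rw [mulVecE_sum]
    simp only [map_sum, map_smul, mulVecE_sum, mulVecE_smul]
    apply Finset.sum_congr rfl
    intro q _
    congr 1
    rw [kron_mulVec, eigen mu a ha, eigen nu b hb, tp_smul, map_smul, map_smul, map_smul,
      hV q.1 q.2, kron_mulVec, eigen mu a ha, eigen nu b' hb', tp_smul]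
  have hx : IAB' (U (IAB.symm (IAB (U.symm (IAB'.symm x))))) = x := by simp
  rw [main, hx]

end
end

section
/- Let {ab_{ij}}_{i,j ∈ {1,2}} and {ab'_{ij}}_{i,j ∈ {1,2}} be orthonormal bases of ℂ⁴, let {a₁, a₂}, {b₁, b₂}, {b'₁, b'₂} be orthonormal bases of ℂ², and let I_AB and I_AB' be the unitary operators on ℂ⁴ determined by I_AB ab_{ij} = aᵢ ⊗ bⱼ and I_AB' ab'_{ij} = aᵢ ⊗ b'ⱼ. Let p ∈ ℂ⁴ be a unit vector, and suppose that I_AB p and I_AB' p represent the same state, i.e. there exists α ∈ ℝ such that I_AB p = exp(α·i) • (I_AB' p). Then the marginal law holds: for each i ∈ {1,2}, |⟨ab_{i1}, p⟩|² + |⟨ab_{i2}, p⟩|² = |⟨ab'_{i1}, p⟩|² + |⟨ab'_{i2}, p⟩|². (Contrapositively: if the marginal law is violated for the two coincidence measurements, then the two entanglement representations I_AB p and I_AB' p of the state p do not differ by a mere phase factor.) -/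
open scoped InnerProductSpace

noncomputable section

/-- The "contraction" of q against u in the first slot. -/
def ctr (u : EuclideanSpace ℂ (Fin 2)) (q : EuclideanSpace ℂ (Fin 2 × Fin 2)) :
    EuclideanSpace ℂ (Fin 2) :=
  WithLp.toLp 2 (fun l => ∑ k, (starRingEnd ℂ) (u k) * q (k, l))

lemma inner_tp (u v : EuclideanSpace ℂ (Fin 2)) (q : EuclideanSpace ℂ (Fin 2 × Fin 2)) :
    ⟪tp u v, q⟫_ℂ = ⟪v, ctr u q⟫_ℂ := by
  simp only [PiLp.inner_apply, RCLike.inner_apply, ctr, tp, Fintype.sum_prod_type,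
    Finset.mul_sum, map_mul, PiLp.toLp_apply]
  rw [Finset.sum_comm]
  congr 1; funext l; rw [Finset.sum_mul]; congr 1; funext k; ring

lemma parseval (b : Fin 2 → EuclideanSpace ℂ (Fin 2)) (hb : Orthonormal ℂ b)
    (w : EuclideanSpace ℂ (Fin 2)) :
    ‖⟪b 0, w⟫_ℂ‖ ^ 2 + ‖⟪b 1, w⟫_ℂ‖ ^ 2 = ‖w‖ ^ 2 := by
  have card : Fintype.card (Fin 2) = Module.finrank ℂ (EuclideanSpace ℂ (Fin 2)) := by simp
  set B0 := basisOfOrthonormalOfCardEqFinrank hb card with hB0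
  have hcoe : (⇑B0 : Fin 2 → EuclideanSpace ℂ (Fin 2)) = b :=
    coe_basisOfOrthonormalOfCardEqFinrank hb card
  set B := B0.toOrthonormalBasis (by rwa [hcoe]) with hB
  have hBc : ∀ j, B j = b j := by
    intro j
    rw [hB, Module.Basis.coe_toOrthonormalBasis, hcoe]
  have h1 : ∀ j, ⟪b j, w⟫_ℂ = B.repr w j := by
    intro j; rw [← hBc j, B.repr_apply_apply]
  have h2 : ‖w‖ = ‖B.repr w‖ := (B.repr.norm_map w).symm
  rw [h1 0, h1 1, h2]
  rw [EuclideanSpace.norm_eq]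
  rw [Real.sq_sqrt (by positivity)]
  rw [Fin.sum_univ_two]

/-- with `I_AB ab_{ij} = aᵢ ⊗ bⱼ` and `I_AB' ab'_{ij} = aᵢ ⊗ b'ⱼ`, if the two
entanglement representations `I_AB p` and `I_AB' p` of a unit state `p` coincide up to a
phase factor `e^{iα}`, then the marginal law holds:
`|⟨ab_{i1}, p⟩|² + |⟨ab_{i2}, p⟩|² = |⟨ab'_{i1}, p⟩|² + |⟨ab'_{i2}, p⟩|²` for each `i`.
(Contrapositively, a violation of the marginal law forces the two entanglement
representations of the state to differ by more than a phase factor.) -/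
theorem same_state_up_to_phase_implies_marginal_law
    (ab ab' : Fin 2 → Fin 2 → EuclideanSpace ℂ (Fin 2 × Fin 2))
    (hab : Orthonormal ℂ (fun q : Fin 2 × Fin 2 => ab q.1 q.2))
    (hab' : Orthonormal ℂ (fun q : Fin 2 × Fin 2 => ab' q.1 q.2))
    (a b b' : Fin 2 → EuclideanSpace ℂ (Fin 2))
    (ha : Orthonormal ℂ a) (hb : Orthonormal ℂ b) (hb' : Orthonormal ℂ b')
    (IAB IAB' : EuclideanSpace ℂ (Fin 2 × Fin 2) ≃ₗᵢ[ℂ] EuclideanSpace ℂ (Fin 2 × Fin 2))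
    (hIAB : ∀ i j : Fin 2, IAB (ab i j) = tp (a i) (b j))
    (hIAB' : ∀ i j : Fin 2, IAB' (ab' i j) = tp (a i) (b' j))
    (p : EuclideanSpace ℂ (Fin 2 × Fin 2)) (hp : ‖p‖ = 1)
    (hphase : ∃ α : ℝ, IAB p = Complex.exp (α * Complex.I) • IAB' p) :
    ∀ i : Fin 2,
      ‖⟪ab i 0, p⟫_ℂ‖ ^ 2 + ‖⟪ab i 1, p⟫_ℂ‖ ^ 2 =
        ‖⟪ab' i 0, p⟫_ℂ‖ ^ 2 + ‖⟪ab' i 1, p⟫_ℂ‖ ^ 2 := by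
  intro i
  obtain ⟨α, hα⟩ := hphase
  set q' := IAB' p with hq'
  have hnc : ‖Complex.exp (α * Complex.I)‖ = 1 := by
    simpa using Complex.abs_exp_ofReal_mul_I α
  have key : ∀ j, ‖⟪ab i j, p⟫_ℂ‖ = ‖⟪b j, ctr (a i) q'⟫_ℂ‖ := by
    intro j
    rw [← IAB.inner_map_map, hIAB, hα, inner_smul_right, norm_mul, hnc, one_mul, inner_tp]
  have key' : ∀ j, ‖⟪ab' i j, p⟫_ℂ‖ = ‖⟪b' j, ctr (a i) q'⟫_ℂ‖ := by
    intro j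
    rw [← IAB'.inner_map_map, hIAB', inner_tp]
  rw [key 0, key 1, key' 0, key' 1, parseval b hb, parseval b' hb']

end
end
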